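/- arXiv:1609.00605 — 3 statements merged into one kernel-verified Lean document; each statement's English description precedes it below -/
import Mathlib

section
/- Let X be a second countable topological space and f : X → X a continuous map. There exist at most countably many attracting sets of f, i.e. the collection of sets of the form ⋂_{n≥0} f^n(U), where U ranges over open sets with f(closure(U)) ⊆ U and closure(U) compact, is countable. -/
open Set

/-- A continuous self-map of a second countable topological space has at most countably
many attracting sets, i.e. the collection of sets of the form `⋂ₙ fⁿ(U)` for trapping
regions `U` (open, with compact closure mapped by `f` into `U`) is countable. -/
theorem stmt_5 {X : Type*} [TopologicalSpace X] [SecondCountableTopology X]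
    (f : X → X) (hf : Continuous f) :
    Set.Countable {A : Set X | ∃ U : Set X, IsOpen U ∧ f '' closure U ⊆ U ∧
      IsCompact (closure U) ∧ A = ⋂ n : ℕ, f^[n] '' U} := by
  classical
  set B := TopologicalSpace.countableBasis X with hB
  have hBc : B.Countable := TopologicalSpace.countable_countableBasis X
  have hBbasis := TopologicalSpace.isBasis_countableBasis X
  refine Set.Countable.mono ?_
    ((Set.countable_setOf_finite_subset hBc).image fun s => ⋂ n : ℕ, f^[n] '' ⋃₀ s)
  rintro A ⟨U, hU, hfU, hcU, rfl⟩
  have hK : IsCompact (f '' closure U) := hcU.image hf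
  -- cover f '' closure U by finitely many basis elements inside U
  have hcov : f '' closure U ⊆ ⋃ i : {b : Set X // b ∈ B ∧ b ⊆ U}, (i : Set X) := by
    intro x hx
    obtain ⟨b, hbB, hxb, hbU⟩ := hBbasis.exists_subset_of_mem_open (hfU hx) hU
    exact mem_iUnion.2 ⟨⟨b, hbB, hbU⟩, hxb⟩
  obtain ⟨t, ht⟩ := hK.elim_finite_subcover (fun i : {b : Set X // b ∈ B ∧ b ⊆ U} => (i : Set X))
    (fun i => TopologicalSpace.isOpen_of_mem_countableBasis i.2.1) hcov
  set s : Set (Set X) := (fun i : {b : Set X // b ∈ B ∧ b ⊆ U} => (i : Set X)) '' ↑t with hs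
  have hsfin : s.Finite := t.finite_toSet.image _
  have hsB : s ⊆ B := by rintro b ⟨i, _, rfl⟩; exact i.2.1
  have hsU : ⋃₀ s ⊆ U := by rintro x ⟨b, ⟨i, _, rfl⟩, hxb⟩; exact i.2.2 hxb
  have hKs : f '' closure U ⊆ ⋃₀ s := by
    intro x hx
    obtain ⟨i, hit, hxi⟩ := mem_iUnion₂.1 (ht hx)
    exact ⟨i, ⟨i, hit, rfl⟩, hxi⟩
  refine ⟨s, ⟨hsfin, hsB⟩, ?_⟩
  have h1 : ∀ n, f^[n] '' ⋃₀ s ⊆ f^[n] '' U := fun n => image_mono hsU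
  have h2 : ∀ n, f^[n+1] '' U ⊆ f^[n] '' ⋃₀ s := by
    intro n
    have : f^[n+1] '' U = f^[n] '' (f '' U) := by
      rw [Function.iterate_succ, image_comp]
    rw [this]
    exact image_mono ((image_mono (f := f) subset_closure).trans hKs)
  apply subset_antisymm
  · exact subset_iInter fun n => (iInter_subset _ n).trans (h1 n)
  · exact subset_iInter fun n => (iInter_subset _ (n+1)).trans (h2 n)
end

section
/- Fix η > 0. In a metric measure space where every ball of radius η/3 has measure at least v > 0 and the total measure is 1, any family of pairwise disjoint balls of radius η/3 has at most ⌊1/v⌋ elements. Consequently, if (A_j) is a monotone (say decreasing) sequence of attracting sets in a compact metric probability space X, each admitting a trapping region V_j such that f maps the η-neighborhood of V_j into V_j, then the sequence (A_j) takes at most finitely many distinct values, with a bound depending only on η (via v). -/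
open Metric Set MeasureTheory

/-- Lemma `le stat1`: in a compact metric probability space in which every ball of radius
`η/3` has measure at least `v > 0`, (a) any finite family of points whose balls of radius
`η/3` are pairwise disjoint has at most `⌊1/v⌋` elements, and consequently (b) a monotone
(decreasing) sequence of attracting sets `A_j`, each admitting a trapping region `V_j`
whose `η`-neighborhood is mapped by `f` into `V_j`, takes at most finitely many distinct
values, with a bound depending only on `v`. -/
theorem stmt_6 {X : Type*} [MetricSpace X] [CompactSpace X]
    [MeasurableSpace X] [BorelSpace X]
    (μ : Measure X) [IsProbabilityMeasure μ]
    (η v : ℝ) (hη : 0 < η) (hv : 0 < v)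
    (hball : ∀ x : X, v ≤ (μ (ball x (η / 3))).toReal)
    (f : X → X) (hf : Continuous f)
    (V : ℕ → Set X) (hVopen : ∀ j, IsOpen (V j))
    (htrap : ∀ j, f '' Metric.thickening η (V j) ⊆ V j)
    (A : ℕ → Set X) (hA : ∀ j, A j = ⋂ n : ℕ, f^[n] '' V j)
    (hmono : Antitone A) :
    (∀ s : Finset X, (∀ x ∈ s, ∀ y ∈ s, x ≠ y →
        Disjoint (ball x (η / 3)) (ball y (η / 3))) → s.card ≤ ⌊1 / v⌋₊) ∧
      (Set.range A).Finite ∧ (Set.range A).ncard ≤ ⌊1 / v⌋₊ + 1 := by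
  classical
  set K := ⌊1 / v⌋₊ with hK
  -- Part (a): disjoint balls counting
  have parta : ∀ s : Finset X, (∀ x ∈ s, ∀ y ∈ s, x ≠ y →
      Disjoint (ball x (η / 3)) (ball y (η / 3))) → s.card ≤ K := by
    intro s hs
    have hdisj : (↑s : Set X).PairwiseDisjoint (fun x => ball x (η / 3)) :=
      fun x hx y hy hxy => hs x hx y hy hxy
    have hmeas : ∀ b ∈ s, MeasurableSet (ball b (η / 3)) := fun b _ => measurableSet_ball
    have hsum : ∑ x ∈ s, μ (ball x (η / 3)) ≤ 1 := by
      rw [← measure_biUnion_finset hdisj hmeas]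
      exact prob_le_one
    have h1 : (s.card : ℝ) * v ≤ 1 := by
      calc (s.card : ℝ) * v = s.card • v := (nsmul_eq_mul _ _).symm
        _ ≤ ∑ x ∈ s, (μ (ball x (η / 3))).toReal :=
            Finset.card_nsmul_le_sum _ _ _ fun x _ => hball x
        _ = (∑ x ∈ s, μ (ball x (η / 3))).toReal :=
            (ENNReal.toReal_sum fun a _ => measure_ne_top μ _).symm
        _ ≤ 1 := by
            have := ENNReal.toReal_mono ENNReal.one_ne_top hsum
            simpa using this
    exact Nat.le_floor (by rwa [le_div_iff₀ hv])
  refine ⟨parta, ?_⟩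
  -- A j ⊆ V j
  have hAV : ∀ i, A i ⊆ V i := by
    intro i x hx
    rw [hA i] at hx
    simpa using mem_iInter.1 hx 0
  -- f maps closure of V i into V i
  have hfc : ∀ i, f '' closure (V i) ⊆ V i := fun i =>
    (image_mono (closure_subset_thickening hη (V i))).trans (htrap i)
  -- A i ⊆ f '' A i
  have hAf : ∀ i, A i ⊆ f '' A i := by
    intro i x hx
    set C : ℕ → Set X := fun n => f^[n] '' closure (V i) with hC
    have hCsucc : ∀ n, C (n + 1) = f '' C n := by
      intro n
      simp only [hC, Function.iterate_succ', Set.image_comp]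
    have hCsub : ∀ n, C (n + 1) ⊆ f^[n] '' V i := by
      intro n
      have h1 : C (n + 1) = f^[n] '' (f '' closure (V i)) := by
        simp only [hC, Function.iterate_succ, Set.image_comp]
      rw [h1]
      exact image_mono (hfc i)
    have hCmono : ∀ n, C (n + 1) ⊆ C n := fun n =>
      (hCsub n).trans (image_mono subset_closure)
    have hCA : A i = ⋂ n, C n := by
      apply Subset.antisymm
      · rw [hA i]
        exact iInter_mono fun n => image_mono subset_closure
      · intro y hy
        rw [hA i]
        exact mem_iInter.2 fun n => hCsub n (mem_iInter.1 hy (n + 1))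
    have hCcomp : ∀ n, IsCompact (C n) := fun n =>
      isClosed_closure.isCompact.image (hf.iterate n)
    set Kk : ℕ → Set X := fun n => f ⁻¹' {x} ∩ C n with hKk
    have hKne : ∀ n, (Kk n).Nonempty := by
      intro n
      have hx' : x ∈ C (n + 1) := by
        rw [hCA] at hx
        exact mem_iInter.1 hx (n + 1)
      rw [hCsucc n] at hx'
      obtain ⟨y, hy, hfy⟩ := hx'
      exact ⟨y, by simp [hKk, hfy], hy⟩
    have hKsub : ∀ n, Kk (n + 1) ⊆ Kk n := fun n =>
      inter_subset_inter_right _ (hCmono n)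
    have hKclosed : ∀ n, IsClosed (Kk n) := fun n =>
      (isClosed_singleton.preimage hf).inter (hCcomp n).isClosed
    obtain ⟨z, hz⟩ := IsCompact.nonempty_iInter_of_sequence_nonempty_isCompact_isClosed
      Kk hKsub hKne ((hKclosed 0).isCompact) hKclosed
    refine ⟨z, ?_, ?_⟩
    · rw [hCA]
      exact mem_iInter.2 fun n => (mem_iInter.1 hz n).2
    · have := (mem_iInter.1 hz 0).1
      simpa [hKk] using this
  -- A i ⊆ f^[n] '' A i
  have hAfn : ∀ i n, A i ⊆ f^[n] '' A i := by
    intro i n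
    induction n with
    | zero => simp
    | succ n ih =>
        have : f '' A i ⊆ f '' (f^[n] '' A i) := image_mono ih
        refine (hAf i).trans (this.trans ?_)
        rw [Function.iterate_succ', Set.image_comp]
  -- Key dynamical lemma
  have key : ∀ i j, A i ⊆ thickening η (V j) → A i ⊆ A j := by
    intro i j hsub x hx
    rw [hA j]
    refine mem_iInter.2 fun n => ?_
    have hx' : x ∈ f^[n + 1] '' A i := hAfn i (n + 1) hx
    rw [Function.iterate_succ, Set.image_comp] at hx'
    exact image_mono ((image_mono hsub).trans (htrap j)) hx'
  -- No strictly decreasing chain of length K+2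
  have nochain : ¬ ∃ g : Fin (K + 2) → ℕ, StrictMono g ∧
      ∀ t : Fin (K + 1), A (g t.succ) ⊂ A (g t.castSucc) := by
    rintro ⟨g, hg, hchain⟩
    have hex : ∀ t : Fin (K + 1), ∃ x, x ∈ A (g t.castSucc) ∧
        x ∉ thickening η (V (g t.succ)) := by
      intro t
      by_contra h
      push_neg at h
      exact (hchain t).not_subset (key _ _ fun x hx => h x hx)
    choose x hxA hxT using hex
    have hdist : ∀ t s : Fin (K + 1), t < s → η ≤ dist (x t) (x s) := by
      intro t s hts
      have hle : g t.succ ≤ g s.castSucc := by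
        refine hg.monotone ?_
        simp only [Fin.le_def, Fin.val_succ, Fin.coe_castSucc]
        exact hts
      have hxs : x s ∈ V (g t.succ) := hAV _ (hmono hle (hxA s))
      by_contra h
      push_neg at h
      exact hxT t (mem_thickening_iff.2 ⟨x s, hxs, h⟩)
    have hinj : Function.Injective x := by
      intro t s h
      by_contra hne
      rcases lt_or_gt_of_ne hne with h' | h'
      · have := hdist t s h'
        rw [h, dist_self] at this
        linarith
      · have := hdist s t h'
        rw [h, dist_self] at this
        linarith
    set s : Finset X := Finset.image x Finset.univ with hsdef
    have hcard : s.card = K + 1 := by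
      rw [hsdef, Finset.card_image_of_injective _ hinj, Finset.card_univ, Fintype.card_fin]
    have hb : s.card ≤ K := by
      refine parta s ?_
      intro a ha b hbb hab
      obtain ⟨t, _, rfl⟩ := Finset.mem_image.1 ha
      obtain ⟨u, _, rfl⟩ := Finset.mem_image.1 hbb
      have htu : t ≠ u := fun h => hab (by rw [h])
      rcases htu.lt_or_gt with h | h
      · exact ball_disjoint_ball (by linarith [hdist t u h])
      · exact (ball_disjoint_ball (by linarith [hdist u t h])).symm
    omega
  -- finiteness of the range
  have hfin : (Set.range A).Finite := by
    by_contra hinf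
    have step : ∀ N : ℕ, ∃ j, N < j ∧ A j ≠ A N := by
      intro N
      by_contra h
      push_neg at h
      apply hinf
      have hsub : Set.range A ⊆ A '' (Set.Iic N) := by
        rintro _ ⟨j, rfl⟩
        rcases le_or_gt j N with hj | hj
        · exact ⟨j, hj, rfl⟩
        · exact ⟨N, le_refl N, (h j hj).symm⟩
      exact ((Set.finite_Iic N).image A).subset hsub
    choose nxt hnxt1 hnxt2 using step
    set g0 : ℕ → ℕ := fun t => Nat.rec 0 (fun _ prev => nxt prev) t with hg0
    have hg0succ : ∀ t, g0 (t + 1) = nxt (g0 t) := fun t => rfl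
    have hssub : ∀ t, A (g0 (t + 1)) ⊂ A (g0 t) := by
      intro t
      rw [hg0succ]
      exact Set.ssubset_iff_subset_ne.2 ⟨hmono (hnxt1 (g0 t)).le, hnxt2 (g0 t)⟩
    have hgmono : StrictMono g0 := strictMono_nat_of_lt_succ fun t => by
      rw [hg0succ]; exact hnxt1 (g0 t)
    refine nochain ⟨fun t => g0 t.val, fun a b hab => hgmono hab, fun t => ?_⟩
    simpa [Fin.val_succ, Fin.coe_castSucc] using hssub t.val
  refine ⟨hfin, ?_⟩
  -- cardinality bound
  by_contra hlt
  push_neg at hlt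
  have hcard2 : K + 2 ≤ hfin.toFinset.card := by
    rw [← Set.ncard_eq_toFinset_card _ hfin]
    omega
  -- representative indices
  have hrepex : ∀ B : Set X, ∃ i : ℕ, B ∈ Set.range A → A i = B := by
    intro B
    by_cases hB : B ∈ Set.range A
    · obtain ⟨i, hi⟩ := hB
      exact ⟨i, fun _ => hi⟩
    · exact ⟨0, fun h => absurd h hB⟩
  choose rep hrep using hrepex
  set I : Finset ℕ := hfin.toFinset.image rep with hI
  have hIcard : K + 2 ≤ I.card := by
    rw [hI, Finset.card_image_of_injOn]
    · exact hcard2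
    · intro B1 h1 B2 h2 he
      have h1' : B1 ∈ Set.range A := by simpa using h1
      have h2' : B2 ∈ Set.range A := by simpa using h2
      rw [← hrep B1 h1', ← hrep B2 h2', he]
  have hIdist : ∀ i1 ∈ I, ∀ i2 ∈ I, i1 ≠ i2 → A i1 ≠ A i2 := by
    intro i1 h1 i2 h2 hne
    obtain ⟨B1, hB1, rfl⟩ := Finset.mem_image.1 h1
    obtain ⟨B2, hB2, rfl⟩ := Finset.mem_image.1 h2
    have hB1' : B1 ∈ Set.range A := by simpa using hB1
    have hB2' : B2 ∈ Set.range A := by simpa using hB2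
    rw [hrep B1 hB1', hrep B2 hB2']
    intro h
    exact hne (by rw [h])
  obtain ⟨J, hJI, hJcard⟩ := Finset.exists_subset_card_eq hIcard
  set g := J.orderIsoOfFin hJcard with hg
  refine nochain ⟨fun t => (g t : ℕ), ?_, ?_⟩
  · intro a b hab
    exact_mod_cast g.strictMono hab
  · intro t
    have hlt' : (g t.castSucc : ℕ) < (g t.succ : ℕ) := by
      exact_mod_cast g.strictMono (Fin.castSucc_lt_succ)
    have hsub : A ((g t.succ : ℕ)) ⊆ A ((g t.castSucc : ℕ)) := hmono hlt'.le
    refine Set.ssubset_iff_subset_ne.2 ⟨hsub, ?_⟩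
    exact hIdist _ (hJI (g t.succ).2) _ (hJI (g t.castSucc).2) hlt'.ne'
end

section
/- Let X be a compact metric space and f : X → X continuous. Suppose K is a minimal quasi-attractor for f (a minimal element, under inclusion, of the set of nonempty intersections of attracting sets) and n ≥ 1. If K′ ⊆ K is a minimal quasi-attractor for f^n with f^n(K′) = K′ and n is minimal with this property, then the sets K′, f(K′), …, f^{n−1}(K′) are pairwise disjoint and their union equals K. -/
open Set Function

set_option maxHeartbeats 1000000

variable {X : Type*} [MetricSpace X] [CompactSpace X]

/-- `A` is an attracting set for `g`: the intersection of the forward images of a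
trapping region (a nonempty open set `U` with `g(closure U) ⊆ U`). -/
def IsAttractingSet (g : X → X) (A : Set X) : Prop :=
  ∃ U : Set X, IsOpen U ∧ U.Nonempty ∧ g '' closure U ⊆ U ∧ A = ⋂ n : ℕ, g^[n] '' U

/-- `A` is a quasi-attractor for `g`: a nonempty intersection of attracting sets. -/
def IsQuasiAttractor (g : X → X) (A : Set X) : Prop :=
  A.Nonempty ∧ ∃ 𝒜 : Set (Set X), 𝒜.Nonempty ∧ (∀ B ∈ 𝒜, IsAttractingSet g B) ∧
    A = ⋂₀ 𝒜

/-- `K` is a minimal quasi-attractor for `g`: minimal under inclusion among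
quasi-attractors. -/
def IsMinimalQuasiAttractor (g : X → X) (K : Set X) : Prop :=
  IsQuasiAttractor g K ∧ ∀ K' : Set X, IsQuasiAttractor g K' → K' ⊆ K → K' = K

lemma nonempty_iInter_directed {ι : Type*} [Nonempty ι] (C : ι → Set X)
    (hd : Directed (· ⊇ ·) C) (hne : ∀ i, (C i).Nonempty) (hcl : ∀ i, IsClosed (C i)) :
    (⋂ i, C i).Nonempty :=
  IsCompact.nonempty_iInter_of_directed_nonempty_isCompact_isClosed C hd hne
    (fun i => (hcl i).isCompact) hcl

lemma image_iInter_directed {ι : Type*} [Nonempty ι] {f : X → X} (hf : Continuous f)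
    (C : ι → Set X) (hd : Directed (· ⊇ ·) C) (hne : ∀ i, (C i).Nonempty)
    (hcl : ∀ i, IsClosed (C i)) :
    f '' (⋂ i, C i) = ⋂ i, f '' C i := by
  apply Subset.antisymm (image_iInter_subset _ _)
  intro x hx
  have hD : (⋂ i, C i ∩ f ⁻¹' {x}).Nonempty := by
    apply nonempty_iInter_directed
    · intro i j
      obtain ⟨k, hki, hkj⟩ := hd i j
      exact ⟨k, inter_subset_inter_left _ hki, inter_subset_inter_left _ hkj⟩
    · intro i
      rcases mem_iInter.1 hx i with ⟨y, hy, hxy⟩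
      exact ⟨y, hy, by simp [hxy]⟩
    · intro i
      exact (hcl i).inter (isClosed_singleton.preimage hf)
  obtain ⟨y, hy⟩ := hD
  simp only [mem_iInter, mem_inter_iff, mem_preimage, mem_singleton_iff] at hy
  exact ⟨y, mem_iInter.2 fun i => (hy i).1, (hy (Classical.arbitrary ι)).2⟩

lemma antitone_directed (C : ℕ → Set X) (h : ∀ m, C (m + 1) ⊆ C m) :
    Directed (· ⊇ ·) C := by
  have hA : Antitone C := antitone_nat_of_succ_le h
  intro i j
  exact ⟨max i j, hA (le_max_left i j), hA (le_max_right i j)⟩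

lemma iter_comm (f : X → X) (a b : ℕ) (x : X) : f^[a] (f^[b] x) = f^[b] (f^[a] x) := by
  rw [← Function.iterate_add_apply, ← Function.iterate_add_apply, Nat.add_comm]

lemma image_iterate_eq_self {g : X → X} {A : Set X} (h : g '' A = A) (m : ℕ) :
    g^[m] '' A = A := by
  induction m with
  | zero => simp
  | succ m ih => rw [Function.iterate_succ', Set.image_comp, ih, h]

/-- The basic facts about a trapping region and its attracting set. -/
lemma trap_spec {g : X → X} (hg : Continuous g) {U : Set X} (hUne : U.Nonempty)
    (htrap : g '' closure U ⊆ U) :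
    (⋂ m : ℕ, g^[m] '' U) = (⋂ m : ℕ, g^[m] '' closure U) ∧
    (∀ m, IsClosed (g^[m] '' closure U)) ∧
    (∀ m, g^[m + 1] '' closure U ⊆ g^[m] '' closure U) ∧
    (⋂ m : ℕ, g^[m] '' U).Nonempty ∧
    IsClosed (⋂ m : ℕ, g^[m] '' U) ∧
    (g '' (⋂ m : ℕ, g^[m] '' U) = ⋂ m : ℕ, g^[m] '' U) ∧
    (⋂ m : ℕ, g^[m] '' U) ⊆ U := by
  have hsub : ∀ m : ℕ, g^[m + 1] '' closure U ⊆ g^[m] '' U := by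
    intro m
    rw [Function.iterate_succ, Set.image_comp]
    exact Set.image_mono htrap
  have hanti : ∀ m : ℕ, g^[m + 1] '' closure U ⊆ g^[m] '' closure U := fun m =>
    (hsub m).trans (Set.image_mono subset_closure)
  have hcl : ∀ m : ℕ, IsClosed (g^[m] '' closure U) := fun m =>
    ((isClosed_closure.isCompact).image (hg.iterate m)).isClosed
  have hcne : ∀ m : ℕ, (g^[m] '' closure U).Nonempty := fun m =>
    (hUne.closure).image _
  have heq : (⋂ m : ℕ, g^[m] '' U) = ⋂ m : ℕ, g^[m] '' closure U := by
    apply Subset.antisymm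
    · exact iInter_mono fun m => Set.image_mono subset_closure
    · intro x hx
      exact mem_iInter.2 fun m => hsub m (mem_iInter.1 hx (m + 1))
  refine ⟨heq, hcl, hanti, ?_, ?_, ?_, ?_⟩
  · rw [heq]
    exact nonempty_iInter_directed _ (antitone_directed _ hanti) hcne hcl
  · rw [heq]; exact isClosed_iInter hcl
  · conv_lhs => rw [heq]
    rw [image_iInter_directed hg _ (antitone_directed _ hanti) hcne hcl]
    apply Subset.antisymm
    · rw [heq]
      refine subset_iInter fun m => ?_
      refine (iInter_subset _ m).trans ?_
      rw [← Set.image_comp, ← Function.iterate_succ']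
      exact hanti m
    · rw [heq]
      refine subset_iInter fun m => ?_
      refine (iInter_subset _ (m + 1)).trans ?_
      rw [← Set.image_comp, ← Function.iterate_succ']
  · intro x hx
    have := mem_iInter.1 hx 0
    simpa using this

/-- Basic facts about an attracting set. -/
lemma attracting_spec {g : X → X} (hg : Continuous g) {A : Set X}
    (hA : IsAttractingSet g A) :
    A.Nonempty ∧ IsClosed A ∧ g '' A = A := by
  obtain ⟨U, hUo, hUne, htrap, hAeq⟩ := hA
  obtain ⟨-, -, -, h1, h2, h3, -⟩ := trap_spec hg hUne htrap
  exact ⟨hAeq ▸ h1, hAeq ▸ h2, by rw [hAeq]; exact h3⟩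

/-- Basic facts about a quasi-attractor. -/
lemma quasi_spec {g : X → X} (hg : Continuous g) {K : Set X}
    (hK : IsQuasiAttractor g K) :
    IsClosed K ∧ g '' K ⊆ K := by
  obtain ⟨hKne, 𝒜, h𝒜ne, h𝒜att, hKeq⟩ := hK
  constructor
  · rw [hKeq]
    exact isClosed_sInter fun A hA => (attracting_spec hg (h𝒜att A hA)).2.1
  · rw [hKeq]
    intro x hx
    rw [mem_sInter]
    intro A hA
    obtain ⟨y, hy, hyx⟩ := hx
    rw [← (attracting_spec hg (h𝒜att A hA)).2.2]
    exact ⟨y, (mem_sInter.1 hy) A hA, hyx⟩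

lemma sInter_nonempty_of_directed {ℬ : Set (Set X)} (hne : ℬ.Nonempty)
    (hdir : DirectedOn (· ⊇ ·) ℬ) (hBne : ∀ B ∈ ℬ, B.Nonempty)
    (hBcl : ∀ B ∈ ℬ, IsClosed B) : (⋂₀ ℬ).Nonempty := by
  haveI : Nonempty ℬ := hne.to_subtype
  rw [sInter_eq_iInter]
  apply nonempty_iInter_directed
  · rintro ⟨B₁, hB₁⟩ ⟨B₂, hB₂⟩
    obtain ⟨B, hB, h1, h2⟩ := hdir B₁ hB₁ B₂ hB₂
    exact ⟨⟨B, hB⟩, h1, h2⟩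
  · exact fun B => hBne B B.2
  · exact fun B => hBcl B B.2

lemma image_sInter_directed {f : X → X} (hf : Continuous f) {ℬ : Set (Set X)}
    (hne : ℬ.Nonempty) (hdir : DirectedOn (· ⊇ ·) ℬ)
    (hBne : ∀ B ∈ ℬ, B.Nonempty) (hBcl : ∀ B ∈ ℬ, IsClosed B) :
    f '' ⋂₀ ℬ = ⋂ B : ℬ, f '' (B : Set X) := by
  haveI : Nonempty ℬ := hne.to_subtype
  rw [sInter_eq_iInter]
  apply image_iInter_directed hf
  · rintro ⟨B₁, hB₁⟩ ⟨B₂, hB₂⟩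
    obtain ⟨B, hB, h1, h2⟩ := hdir B₁ hB₁ B₂ hB₂
    exact ⟨⟨B, hB⟩, h1, h2⟩
  · exact fun B => hBne B B.2
  · exact fun B => hBcl B B.2

/-- A minimal quasi-attractor is the intersection of a directed family of
attracting sets. -/
lemma minimal_directed {g : X → X} (hg : Continuous g) {K : Set X}
    (hK : IsMinimalQuasiAttractor g K) :
    ∃ ℬ : Set (Set X), ℬ.Nonempty ∧ DirectedOn (· ⊇ ·) ℬ ∧
      (∀ B ∈ ℬ, IsAttractingSet g B) ∧ K = ⋂₀ ℬ := by
  classical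
  obtain ⟨⟨hKne, 𝒜, h𝒜ne, h𝒜att, hKeq⟩, hmin⟩ := hK
  choose u huo hune hutrap hueq using fun A : 𝒜 => h𝒜att A.1 A.2
  obtain ⟨UF, hUFdef⟩ : ∃ UF : Finset 𝒜 → Set X, ∀ F, UF F = ⋂ A ∈ F, u A :=
    ⟨_, fun _ => rfl⟩
  obtain ⟨BF, hBFdef⟩ : ∃ BF : Finset 𝒜 → Set X,
      ∀ F, BF F = ⋂ m : ℕ, g^[m] '' UF F := ⟨_, fun _ => rfl⟩
  have hKsubu : ∀ A : 𝒜, K ⊆ u A := by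
    intro A
    calc K ⊆ (A : Set X) := by rw [hKeq]; exact sInter_subset_of_mem A.2
    _ ⊆ u A := by
        rw [hueq A]
        intro x hx
        simpa using mem_iInter.1 hx 0
  have hUFo : ∀ F, IsOpen (UF F) := fun F => by
    rw [hUFdef]; exact isOpen_biInter_finset fun A _ => huo A
  have hKUF : ∀ F, K ⊆ UF F := fun F => by
    rw [hUFdef]; exact subset_iInter₂ fun A _ => hKsubu A
  have hUFne : ∀ F, (UF F).Nonempty := fun F => hKne.mono (hKUF F)
  have hUFtrap : ∀ F : Finset 𝒜, g '' closure (UF F) ⊆ UF F := by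
    intro F
    rw [hUFdef]
    refine subset_iInter₂ fun A hA => ?_
    exact (Set.image_mono (closure_mono (biInter_subset_of_mem hA))).trans
      (hutrap A)
  have hBFatt : ∀ F : Finset 𝒜, IsAttractingSet g (BF F) :=
    fun F => ⟨UF F, hUFo F, hUFne F, hUFtrap F, hBFdef F⟩
  have hBFmono : ∀ F G : Finset 𝒜, F ⊆ G → BF G ⊆ BF F := by
    intro F G hFG
    rw [hBFdef, hBFdef]
    refine iInter_mono fun m => Set.image_mono ?_
    rw [hUFdef, hUFdef]
    exact biInter_subset_biInter_left hFG
  have hsingle : ∀ A : 𝒜, (A : Set X) = BF {A} := by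
    intro A
    rw [hBFdef, hueq A]
    have : UF {A} = u A := by
      rw [hUFdef]
      simp
    rw [this]
  refine ⟨{B | ∃ F : Finset 𝒜, F.Nonempty ∧ B = BF F}, ?_, ?_, ?_, ?_⟩
  · obtain ⟨A, hA⟩ := h𝒜ne
    exact ⟨BF {⟨A, hA⟩}, {⟨A, hA⟩}, Finset.singleton_nonempty _, rfl⟩
  · rintro B₁ ⟨F₁, hF₁, rfl⟩ B₂ ⟨F₂, hF₂, rfl⟩
    exact ⟨BF (F₁ ∪ F₂), ⟨F₁ ∪ F₂, hF₁.mono Finset.subset_union_left, rfl⟩,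
      hBFmono _ _ Finset.subset_union_left, hBFmono _ _ Finset.subset_union_right⟩
  · rintro B ⟨F, hF, rfl⟩
    exact hBFatt F
  · have hℬne : {B | ∃ F : Finset 𝒜, F.Nonempty ∧ B = BF F}.Nonempty := by
      obtain ⟨A, hA⟩ := h𝒜ne
      exact ⟨BF {⟨A, hA⟩}, {⟨A, hA⟩}, Finset.singleton_nonempty _, rfl⟩
    have hdir : DirectedOn (· ⊇ ·) {B | ∃ F : Finset 𝒜, F.Nonempty ∧ B = BF F} := by
      rintro B₁ ⟨F₁, hF₁, rfl⟩ B₂ ⟨F₂, hF₂, rfl⟩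
      exact ⟨BF (F₁ ∪ F₂), ⟨F₁ ∪ F₂, hF₁.mono Finset.subset_union_left, rfl⟩,
        hBFmono _ _ Finset.subset_union_left, hBFmono _ _ Finset.subset_union_right⟩
    have hBne : ∀ B ∈ {B | ∃ F : Finset 𝒜, F.Nonempty ∧ B = BF F}, B.Nonempty := by
      rintro B ⟨F, hF, rfl⟩
      rw [hBFdef]
      exact (trap_spec hg (hUFne F) (hUFtrap F)).2.2.2.1
    have hBcl : ∀ B ∈ {B | ∃ F : Finset 𝒜, F.Nonempty ∧ B = BF F}, IsClosed B := by
      rintro B ⟨F, hF, rfl⟩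
      rw [hBFdef]
      exact (trap_spec hg (hUFne F) (hUFtrap F)).2.2.2.2.1
    have hsubK : ⋂₀ {B | ∃ F : Finset 𝒜, F.Nonempty ∧ B = BF F} ⊆ K := by
      rw [hKeq]
      refine subset_sInter fun A hA => ?_
      have hmem : A ∈ {B | ∃ F : Finset 𝒜, F.Nonempty ∧ B = BF F} :=
        ⟨{⟨A, hA⟩}, Finset.singleton_nonempty _, hsingle ⟨A, hA⟩⟩
      exact sInter_subset_of_mem hmem
    have hquasi : IsQuasiAttractor g (⋂₀ {B | ∃ F : Finset 𝒜, F.Nonempty ∧ B = BF F}) := by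
      refine ⟨sInter_nonempty_of_directed hℬne hdir hBne hBcl, _, hℬne, ?_, rfl⟩
      rintro B ⟨F, hF, rfl⟩
      exact hBFatt F
    exact (hmin _ hquasi hsubK).symm

omit [MetricSpace X] [CompactSpace X] in
lemma iterate_comm_f (f : X → X) (a : ℕ) (x : X) : f^[a] (f x) = f (f^[a] x) := by
  rw [← Function.iterate_succ_apply, Function.iterate_succ_apply']

omit [MetricSpace X] [CompactSpace X] in
lemma iterate_iterate_comm_f (f : X → X) (a b : ℕ) (x : X) :
    (f^[a])^[b] (f x) = f ((f^[a])^[b] x) := by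
  rw [← Function.iterate_mul, iterate_comm_f, Function.iterate_mul]

omit [MetricSpace X] [CompactSpace X] in
lemma iterate_sub_one_apply (f : X → X) {n : ℕ} (hn : 1 ≤ n) (x : X) :
    f^[n - 1] (f x) = f^[n] x := by
  have h := Function.iterate_succ_apply f (n - 1) x
  have h2 : (n - 1).succ = n := by omega
  rw [h2] at h
  exact h.symm

omit [MetricSpace X] [CompactSpace X] in
lemma f_iterate_sub_one (f : X → X) {n : ℕ} (hn : 1 ≤ n) (x : X) :
    f (f^[n - 1] x) = f^[n] x := by
  have h := Function.iterate_succ_apply' f (n - 1) x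
  have h2 : (n - 1).succ = n := by omega
  rw [h2] at h
  exact h.symm

lemma image_attracting {f : X → X} (hf : Continuous f) {n : ℕ} (hn : 1 ≤ n)
    {A : Set X} (hA : IsAttractingSet (f^[n]) A) : IsAttractingSet (f^[n]) (f '' A) := by
  obtain ⟨U, hUo, hUne, htrap, hAeq⟩ := hA
  have hg : Continuous (f^[n]) := hf.iterate n
  obtain ⟨hCeq, hCcl, hCanti, hAne', hAcl', hginv', hAU'⟩ := trap_spec hg hUne htrap
  have hAne : A.Nonempty := hAeq ▸ hAne'
  have hginv : f^[n] '' A = A := by rw [hAeq]; exact hginv'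
  have hAU : A ⊆ U := hAeq ▸ hAU'
  refine ⟨f^[n - 1] ⁻¹' U, hUo.preimage (hf.iterate _), ?_, ?_, ?_⟩
  · obtain ⟨a, ha⟩ := hAne
    refine ⟨f a, ?_⟩
    rw [mem_preimage, iterate_sub_one_apply f hn]
    exact hAU (hginv ▸ ⟨a, ha, rfl⟩)
  · -- trapping
    rintro x ⟨w, hw, rfl⟩
    have hw' : w ∈ f^[n - 1] ⁻¹' closure U :=
      closure_minimal (preimage_mono subset_closure)
        (isClosed_closure.preimage (hf.iterate _)) hw
    have hcomm : f^[n - 1] (f^[n] w) = f^[n] (f^[n - 1] w) := by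
      rw [← Function.iterate_add_apply, ← Function.iterate_add_apply, Nat.add_comm]
    rw [mem_preimage, hcomm]
    exact htrap ⟨f^[n - 1] w, hw', rfl⟩
  · -- f '' A = ⋂ m, (f^[n])^[m] '' (f^[n-1] ⁻¹' U)
    apply Subset.antisymm
    · rintro x ⟨a, ha, rfl⟩
      refine mem_iInter.2 fun m => ?_
      have hmem : a ∈ (f^[n])^[m] '' A := by
        rw [image_iterate_eq_self hginv]; exact ha
      obtain ⟨b, hb, hba⟩ := hmem
      refine ⟨f b, ?_, ?_⟩
      · rw [mem_preimage, iterate_sub_one_apply f hn]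
        exact hAU (hginv ▸ ⟨b, hb, rfl⟩)
      · rw [iterate_iterate_comm_f, hba]
    · intro x hx
      have key : ∀ m : ℕ, x ∈ f '' ((f^[n])^[m] '' closure U) := by
        intro m
        obtain ⟨w, hw, hwx⟩ := mem_iInter.1 hx (m + 1)
        rw [mem_preimage] at hw
        refine ⟨(f^[n])^[m] (f^[n - 1] w), Set.image_mono subset_closure ⟨f^[n - 1] w, hw, rfl⟩, ?_⟩
        calc f ((f^[n])^[m] (f^[n - 1] w)) = (f^[n])^[m] (f (f^[n - 1] w)) :=
              (iterate_iterate_comm_f f n m _).symm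
        _ = (f^[n])^[m] (f^[n] w) := by rw [f_iterate_sub_one f hn]
        _ = (f^[n])^[m + 1] w := (Function.iterate_succ_apply (f^[n]) m w).symm
        _ = x := hwx
      have hxm : x ∈ ⋂ m : ℕ, f '' ((f^[n])^[m] '' closure U) := mem_iInter.2 key
      rwa [← image_iInter_directed hf _ (antitone_directed _ hCanti)
        (fun m => (hUne.closure).image _) hCcl, ← hCeq, ← hAeq] at hxm

lemma union_attracting {f : X → X} (hf : Continuous f) {n : ℕ} (hn : 1 ≤ n)
    {B U : Set X} (hUo : IsOpen U) (hUne : U.Nonempty)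
    (htrap : f^[n] '' closure U ⊆ U) (hBeq : B = ⋂ m : ℕ, (f^[n])^[m] '' U) :
    IsAttractingSet f (⋃ i ∈ Finset.range n, f^[i] '' B) := by
  have hg : Continuous (f^[n]) := hf.iterate n
  obtain ⟨hCeq, hCcl, hCanti, hBne', hBcl', hginv', hBU'⟩ := trap_spec hg hUne htrap
  have hBne : B.Nonempty := hBeq ▸ hBne'
  have hginv : f^[n] '' B = B := by rw [hBeq]; exact hginv'
  have hBU : B ⊆ U := hBeq ▸ hBU'
  have hC0cp : IsCompact (f^[n] '' closure U) := (isClosed_closure.isCompact).image hg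
  have hBC0 : B ⊆ f^[n] '' closure U := by
    rw [← hginv]
    exact Set.image_mono (hBU.trans subset_closure)
  -- build the decreasing chain of open sets
  obtain ⟨W, hW0, hWo, hWC, hWcl⟩ : ∃ W : ℕ → Set X, W 0 = U ∧ (∀ j, IsOpen (W j)) ∧
      (∀ j, f^[n] '' closure U ⊆ W j) ∧ (∀ j, closure (W (j + 1)) ⊆ W j) := by
    have hstep : ∀ V : Set X, IsOpen V → f^[n] '' closure U ⊆ V →
        ∃ V' : Set X, IsOpen V' ∧ f^[n] '' closure U ⊆ V' ∧ closure V' ⊆ V :=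
      fun V hVo hCV => normal_exists_closure_subset hC0cp.isClosed hVo hCV
    choose Φ hΦo hΦC hΦcl using hstep
    let W' : ℕ → {V : Set X // IsOpen V ∧ f^[n] '' closure U ⊆ V} := fun j =>
      Nat.rec ⟨U, hUo, htrap⟩ (fun _ p => ⟨Φ p.1 p.2.1 p.2.2, hΦo _ _ _, hΦC _ _ _⟩) j
    exact ⟨fun j => (W' j).1, rfl, fun j => (W' j).2.1, fun j => (W' j).2.2,
      fun j => hΦcl (W' j).1 (W' j).2.1 (W' j).2.2⟩
  have hWU : ∀ j, W j ⊆ U := by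
    intro j
    induction j with
    | zero => rw [hW0]
    | succ j ih => exact (subset_closure.trans (hWcl j)).trans ih
  have hBW : ∀ j, B ⊆ W j := fun j => hBC0.trans (hWC j)
  refine ⟨⋃ j ∈ Finset.range n, f^[j] ⁻¹' W j, ?_, ?_, ?_, ?_⟩
  · exact isOpen_biUnion fun j _ => (hWo j).preimage (hf.iterate j)
  · obtain ⟨b, hb⟩ := hBne
    refine ⟨b, mem_biUnion (Finset.mem_range.2 hn) ?_⟩
    rw [mem_preimage, Function.iterate_zero_apply, hW0]
    exact hBU hb
  · -- trapping for f
    rintro y ⟨x, hx, rfl⟩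
    have hclV : closure (⋃ j ∈ Finset.range n, f^[j] ⁻¹' W j) ⊆
        ⋃ j ∈ Finset.range n, f^[j] ⁻¹' closure (W j) := by
      apply closure_minimal
      · exact iUnion₂_mono fun j _ => preimage_mono subset_closure
      · exact (Finset.range n).finite_toSet.isClosed_biUnion fun j _ =>
          isClosed_closure.preimage (hf.iterate j)
    obtain ⟨j, hj, hxj⟩ := mem_iUnion₂.1 (hclV hx)
    rw [mem_preimage] at hxj
    rw [Finset.mem_range] at hj
    match j with
    | 0 =>
      refine mem_biUnion (Finset.mem_range.2 (by omega : n - 1 < n)) ?_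
      rw [mem_preimage, iterate_sub_one_apply f hn]
      rw [Function.iterate_zero_apply, hW0] at hxj
      exact hWC (n - 1) ⟨x, hxj, rfl⟩
    | j + 1 =>
      refine mem_biUnion (Finset.mem_range.2 (by omega : j < n)) ?_
      rw [mem_preimage, ← Function.iterate_succ_apply]
      exact hWcl j hxj
  · -- the attracting set is the union
    apply Subset.antisymm
    · intro x hx
      obtain ⟨i, hi, b, hb, rfl⟩ := by
        simpa only [mem_iUnion, Finset.mem_range, exists_prop] using hx
      refine mem_iInter.2 fun m => ?_
      obtain ⟨b'', hb'', hb''b⟩ : b ∈ (f^[n])^[m] '' B := by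
        rw [image_iterate_eq_self hginv]; exact hb
      obtain ⟨nm, hnm_eq⟩ : ∃ t, t = n * m := ⟨_, rfl⟩
      have hnm_ge : m ≤ nm := by
        rw [hnm_eq]
        calc m = 1 * m := (one_mul m).symm
        _ ≤ n * m := Nat.mul_le_mul_right m hn
      obtain ⟨k, hk⟩ : ∃ k, k + m = i + nm := ⟨i + nm - m, by omega⟩
      -- find j < n with n ∣ j + k
      obtain ⟨j, hjn, t, hjt⟩ : ∃ j, j < n ∧ ∃ t, j + k = n * t := by
        have hqr : n * (k / n) + k % n = k := Nat.div_add_mod k n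
        have hrn : k % n < n := Nat.mod_lt _ (by omega)
        obtain ⟨nq, hnq⟩ : ∃ t, t = n * (k / n) := ⟨_, rfl⟩
        rw [← hnq] at hqr
        by_cases hr : k % n = 0
        · exact ⟨0, by omega, k / n, by rw [← hnq]; omega⟩
        · refine ⟨n - k % n, by omega, k / n + 1, ?_⟩
          rw [Nat.mul_succ, ← hnq]
          omega
      refine ⟨f^[k] b'', mem_biUnion (Finset.mem_range.2 hjn) ?_, ?_⟩
      · rw [mem_preimage, ← Function.iterate_add_apply, hjt, Function.iterate_mul]
        exact hBW j (by rw [← image_iterate_eq_self hginv t]; exact ⟨b'', hb'', rfl⟩)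
      · rw [← Function.iterate_add_apply, show m + k = i + nm from by omega,
          Function.iterate_add_apply, hnm_eq, Function.iterate_mul, hb''b]
    · intro x hx
      -- step 1 : x is in arbitrarily late images of U
      have hT : ∀ t : ℕ, ∃ s : ℕ, t ≤ s ∧ x ∈ f^[s] '' U := by
        intro t
        obtain ⟨v, hv, hvx⟩ := mem_iInter.1 hx (t + (n - 1))
        obtain ⟨j, hj, hvj⟩ := mem_iUnion₂.1 hv
        rw [Finset.mem_range] at hj
        rw [mem_preimage] at hvj
        refine ⟨t + (n - 1) - j, by omega, f^[j] v, hWU j hvj, ?_⟩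
        rw [← Function.iterate_add_apply,
          show t + (n - 1) - j + j = t + (n - 1) from by omega]
        exact hvx
      -- step 2 : pigeonhole on residues
      obtain ⟨r, hrn, hQ⟩ : ∃ r, r < n ∧ ∀ Q, ∃ q, Q ≤ q ∧
          x ∈ f^[r] '' ((f^[n])^[q] '' closure U) := by
        by_contra hcon
        push_neg at hcon
        have hcon' : ∀ r : ℕ, ∃ Qr : ℕ, ∀ q, Qr ≤ q →
            ¬(r < n ∧ x ∈ f^[r] '' ((f^[n])^[q] '' closure U)) := by
          intro r
          by_cases hr : r < n
          · obtain ⟨Q, hQ⟩ := hcon r hr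
            exact ⟨Q, fun q hq hand => hQ q hq hand.2⟩
          · exact ⟨0, fun q _ hand => hr hand.1⟩
        choose Qf hQf using hcon'
        set Qm := (Finset.range n).sup Qf with hQm
        obtain ⟨s, hs, u, hu, hux⟩ := hT (n * (Qm + 1))
        have hqr : n * (s / n) + s % n = s := Nat.div_add_mod s n
        have hrn' : s % n < n := Nat.mod_lt _ (by omega)
        have hq : Qm + 1 ≤ s / n := by
          by_contra hq'
          push_neg at hq'
          have h1 : s / n ≤ Qm := by omega
          have h2 : n * (s / n) ≤ n * Qm := Nat.mul_le_mul_left n h1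
          have h3 : n * (Qm + 1) = n * Qm + n := Nat.mul_succ n Qm
          omega
        refine hQf (s % n) (s / n) ?_ ⟨hrn', ?_⟩
        · calc Qf (s % n) ≤ Qm := Finset.le_sup (Finset.mem_range.2 hrn')
          _ ≤ s / n := by omega
        · refine ⟨(f^[n])^[s / n] u, ⟨u, subset_closure hu, rfl⟩, ?_⟩
          rw [← Function.iterate_mul, ← Function.iterate_add_apply]
          rw [show s % n + n * (s / n) = s by omega]
          exact hux
      -- step 3 : conclude x ∈ f^[r] '' B
      have hall : ∀ q : ℕ, x ∈ f^[r] '' ((f^[n])^[q] '' closure U) := by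
        intro q
        obtain ⟨q', hq', hx'⟩ := hQ q
        have hA : Antitone (fun m => (f^[n])^[m] '' closure U) :=
          antitone_nat_of_succ_le hCanti
        exact Set.image_mono (hA hq') hx'
      have hxr : x ∈ f^[r] '' B := by
        have hmem : x ∈ ⋂ q : ℕ, f^[r] '' ((f^[n])^[q] '' closure U) := mem_iInter.2 hall
        rwa [← image_iInter_directed (hf.iterate r) _ (antitone_directed _ hCanti)
          (fun m => (hUne.closure).image _) hCcl, ← hCeq, ← hBeq] at hmem
      exact mem_biUnion (Finset.mem_range.2 hrn) hxr

lemma iter_image_attracting {f : X → X} (hf : Continuous f) {n : ℕ} (hn : 1 ≤ n)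
    {A : Set X} (hA : IsAttractingSet (f^[n]) A) (i : ℕ) :
    IsAttractingSet (f^[n]) (f^[i] '' A) := by
  induction i with
  | zero => simpa using hA
  | succ i ih =>
    rw [Function.iterate_succ', Set.image_comp]
    exact image_attracting hf hn ih


/-- Splitting of a minimal quasi-attractor under iteration: if `K` is a minimal
quasi-attractor for `f`, `K' ⊆ K` is a minimal quasi-attractor for `fⁿ` with
`fⁿ(K') = K'` and `n ≥ 1` minimal with this property, then the sets
`K', f(K'), …, f^{n-1}(K')` are pairwise disjoint and their union is `K`. -/
theorem stmt_17 (f : X → X) (hf : Continuous f)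
    (K K' : Set X) (hK : IsMinimalQuasiAttractor f K)
    (n : ℕ) (hn : 1 ≤ n)
    (hK' : IsMinimalQuasiAttractor (f^[n]) K') (hsub : K' ⊆ K)
    (hinv : f^[n] '' K' = K')
    (hmin : ∀ m : ℕ, 1 ≤ m → m < n → f^[m] '' K' ≠ K') :
    (∀ i < n, ∀ j < n, i ≠ j → Disjoint (f^[i] '' K') (f^[j] '' K')) ∧
      (⋃ i ∈ Finset.range n, f^[i] '' K') = K := by
  have hg : Continuous (f^[n]) := hf.iterate n
  obtain ⟨ℬ, hℬne, hdir, hatt, hK'eq⟩ := minimal_directed hg hK'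
  have hBne : ∀ B ∈ ℬ, B.Nonempty := fun B hB => (attracting_spec hg (hatt B hB)).1
  have hBcl : ∀ B ∈ ℬ, IsClosed B := fun B hB => (attracting_spec hg (hatt B hB)).2.1
  haveI : Nonempty ℬ := hℬne.to_subtype
  have hK'ne : K'.Nonempty := hK'.1.1
  have hKieq : ∀ i : ℕ, f^[i] '' K' = ⋂₀ ((Set.image (f^[i])) '' ℬ) := by
    intro i
    rw [hK'eq, image_sInter_directed (hf.iterate i) hℬne hdir hBne hBcl,
      sInter_image, biInter_eq_iInter]
  have hKiq : ∀ i : ℕ, IsQuasiAttractor (f^[n]) (f^[i] '' K') := by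
    intro i
    refine ⟨hK'ne.image _, (Set.image (f^[i])) '' ℬ, hℬne.image _, ?_, hKieq i⟩
    rintro B ⟨B₀, hB₀, rfl⟩
    exact iter_image_attracting hf hn (hatt B₀ hB₀) i
  have hmin' := hK'.2
  -- core disjointness
  have hdisj : ∀ i j : ℕ, i < j → j < n → Disjoint (f^[i] '' K') (f^[j] '' K') := by
    intro i j hij hjn
    rw [Set.disjoint_left]
    intro x hxi hxj
    have hQne : (f^[i + (n - j)] '' K' ∩ K').Nonempty := by
      obtain ⟨a, ha, hax⟩ := hxi
      obtain ⟨b, hb, hbx⟩ := hxj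
      refine ⟨f^[n - j] x, ?_, ?_⟩
      · rw [← hax, ← Function.iterate_add_apply,
          show n - j + i = i + (n - j) from by omega]
        exact ⟨a, ha, rfl⟩
      · rw [← hbx, ← Function.iterate_add_apply,
          show n - j + j = n from by omega, ← hinv]
        exact ⟨b, hb, rfl⟩
    set d := i + (n - j) with hd
    have hQq : IsQuasiAttractor (f^[n]) (f^[d] '' K' ∩ K') := by
      refine ⟨hQne, (Set.image (f^[d])) '' ℬ ∪ ℬ, ?_, ?_, ?_⟩
      · exact (hℬne.image _).mono subset_union_left
      · rintro B (⟨B₀, hB₀, rfl⟩ | hB)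
        · exact iter_image_attracting hf hn (hatt B₀ hB₀) d
        · exact hatt B hB
      · rw [sInter_union, ← hKieq d, ← hK'eq]
    have hQK' : f^[d] '' K' ∩ K' = K' := hmin' _ hQq inter_subset_right
    have hsub2 : K' ⊆ f^[d] '' K' := by
      nth_rewrite 1 [← hQK']
      exact inter_subset_left
    have h6 : f^[n - d] '' (f^[d] '' K') = K' := by
      rw [← Set.image_comp, ← Function.iterate_add,
        show n - d + d = n from by omega, hinv]
    have h5 : f^[n - d] '' K' ⊆ K' :=
      calc f^[n - d] '' K' ⊆ f^[n - d] '' (f^[d] '' K') := Set.image_mono hsub2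
      _ = K' := h6
    have h7 : f^[n - d] '' K' = K' := hmin' _ (hKiq (n - d)) h5
    exact hmin (n - d) (by omega) (by omega) h7
  -- the union is K
  have hfK : f '' K ⊆ K := (quasi_spec hf hK.1).2
  have hfiK : ∀ i : ℕ, f^[i] '' K ⊆ K := by
    intro i
    induction i with
    | zero => simp
    | succ i ih =>
      rw [Function.iterate_succ', Set.image_comp]
      exact (Set.image_mono ih).trans hfK
  have hLsub : (⋃ i ∈ Finset.range n, f^[i] '' K') ⊆ K :=
    iUnion₂_subset fun i _ => (Set.image_mono hsub).trans (hfiK i)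
  -- each big union over B ∈ ℬ is attracting for f
  choose u huo hune hutrap hueq using fun B : ℬ => hatt B.1 B.2
  have hLB : ∀ B : ℬ, IsAttractingSet f (⋃ i ∈ Finset.range n, f^[i] '' (B : Set X)) :=
    fun B => union_attracting hf hn (huo B) (hune B) (hutrap B) (hueq B)
  -- cofinality : the union equals the intersection of the L_B
  have hLeq : (⋃ i ∈ Finset.range n, f^[i] '' K') =
      ⋂ B : ℬ, ⋃ i ∈ Finset.range n, f^[i] '' (B : Set X) := by
    apply Subset.antisymm
    · refine subset_iInter fun B => ?_
      refine iUnion₂_mono fun i _ => Set.image_mono ?_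
      rw [hK'eq]
      exact sInter_subset_of_mem B.2
    · intro x hx
      have hex : ∃ i, i < n ∧ ∀ B ∈ ℬ, ∃ B' ∈ ℬ, B' ⊆ B ∧ x ∈ f^[i] '' B' := by
        by_contra hcon
        push_neg at hcon
        have hcon' : ∀ i : ℕ, ∃ B, B ∈ ℬ ∧ (i < n → ∀ B' ∈ ℬ, B' ⊆ B → x ∉ f^[i] '' B') := by
          intro i
          by_cases hi : i < n
          · obtain ⟨B, hB, hB2⟩ := hcon i hi
            refine ⟨B, hB, fun _ B' hB' hB'B => ?_⟩
            intro hxB'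
            exact (hB2 B' hB' hB'B) hxB'
          · exact ⟨hℬne.some, hℬne.some_mem, fun h => absurd h hi⟩
        choose Cc hCc hCc2 using hcon'
        have hlb : ∀ m : ℕ, ∃ D ∈ ℬ, ∀ i < m, D ⊆ Cc i := by
          intro m
          induction m with
          | zero => exact ⟨hℬne.some, hℬne.some_mem, fun i hi => absurd hi (by omega)⟩
          | succ m ih =>
            obtain ⟨D, hD, hDsub⟩ := ih
            obtain ⟨D', hD', h1, h2⟩ := hdir D hD (Cc m) (hCc m)
            refine ⟨D', hD', fun i hi => ?_⟩
            rcases Nat.lt_succ_iff_lt_or_eq.1 hi with h | h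
            · exact h1.trans (hDsub i h)
            · subst h; exact h2
        obtain ⟨D, hD, hDsub⟩ := hlb n
        obtain ⟨i, hi, hxi⟩ := mem_iUnion₂.1 (mem_iInter.1 hx ⟨D, hD⟩)
        rw [Finset.mem_range] at hi
        exact hCc2 i hi D hD (hDsub i hi) hxi
      obtain ⟨i, hin, hcof⟩ := hex
      have hxiB : ∀ B : ℬ, x ∈ f^[i] '' (B : Set X) := by
        intro B
        obtain ⟨B', hB', hsub', hx'⟩ := hcof B B.2
        exact Set.image_mono hsub' hx'
      have hmem : x ∈ ⋂ B : ℬ, f^[i] '' (B : Set X) := mem_iInter.2 hxiB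
      rw [← image_sInter_directed (hf.iterate i) hℬne hdir hBne hBcl, ← hK'eq] at hmem
      exact mem_biUnion (Finset.mem_range.2 hin) hmem
  have hLq : IsQuasiAttractor f (⋃ i ∈ Finset.range n, f^[i] '' K') := by
    refine ⟨?_, (fun B => ⋃ i ∈ Finset.range n, f^[i] '' B) '' ℬ, hℬne.image _, ?_, ?_⟩
    · obtain ⟨a, ha⟩ := hK'ne
      exact ⟨a, mem_biUnion (Finset.mem_range.2 hn) ⟨a, ha, by simp⟩⟩
    · rintro L₀ ⟨B, hB, rfl⟩
      exact hLB ⟨B, hB⟩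
    · rw [hLeq, sInter_image, biInter_eq_iInter]
  refine ⟨?_, hK.2 _ hLq hLsub⟩
  intro i hi j hj hij
  rcases lt_or_gt_of_ne hij with h | h
  · exact hdisj i j h hj
  · exact (hdisj j i h hi).symm
end
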